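/- For N = 2 variables, the operators M_{1,k} = x_1^k · x_1/(x_1−x_2) · Γ_1 + x_2^k · x_2/(x_2−x_1) · Γ_2 satisfy q · M_{1,k+1} M_{1,k−1} = M_{1,k}^2 − M_{2,k} M_{0,k}, where M_{2,k} = (x_1 x_2)^k Γ_1 Γ_2 and M_{0,k} = Id, for every k ∈ ℤ. -/

import Mathlib

noncomputable section

open MvPolynomial

/-- The base field `ℚ(q^{1/2})`; `sQ` is the square root of `q`. -/
abbrev Rq : Type := RatFunc ℚ

/-- `q^{1/2}`. -/
def sQ : Rq := RatFunc.X

lemma sq_ne_zero : sQ ≠ 0 := RatFunc.X_ne_zero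

/-- The parameter `q`. -/
def qq : Rq := sQ ^ 2

/-- Polynomials in the variables `y_i = x_i^{1/2}`, `i = 1, …, N`. -/
abbrev Pol (N : ℕ) := MvPolynomial (Fin N) Rq

/-- The field of rational functions in `x_1^{1/2}, …, x_N^{1/2}` over `ℚ(q^{1/2})`. -/
abbrev K (N : ℕ) := FractionRing (Pol N)

/-- The substitution `y_j ↦ q^{v_j/2} y_j` on polynomials. -/
def shiftHom (N : ℕ) (v : Fin N → ℤ) : Pol N →ₐ[Rq] Pol N :=
  aeval fun j => C (sQ ^ v j) * X j

/-- The substitution `y_j ↦ q^{v_j/2} y_j` as an algebra automorphism of polynomials. -/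
def shiftEquiv (N : ℕ) (v : Fin N → ℤ) : Pol N ≃ₐ[Rq] Pol N :=
  AlgEquiv.ofAlgHom (shiftHom N v) (shiftHom N (-v))
    (by
      apply MvPolynomial.algHom_ext
      intro j
      simp [shiftHom]
      rw [← mul_assoc, ← C_mul, inv_mul_cancel₀ (zpow_ne_zero _ sq_ne_zero), C_1, one_mul])
    (by
      apply MvPolynomial.algHom_ext
      intro j
      simp [shiftHom]
      rw [← mul_assoc, ← C_mul, mul_inv_cancel₀ (zpow_ne_zero _ sq_ne_zero), C_1, one_mul])

/-- The `q`-shift operator `∏_i Γ_i^{v_i/2}` : the field automorphism of `K N` induced by the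
substitution `y_j = x_j^{1/2} ↦ q^{v_j / 2} y_j`, i.e. `x_j ↦ q^{v_j} x_j`.  In particular
`Γ N (2 • v)` is the honest shift `x_j ↦ q^{v_j} x_j` and half-units allow `Γ_j^{1/2}`. -/
def Γ (N : ℕ) (v : Fin N → ℤ) : K N ≃+* K N :=
  IsFractionRing.ringEquivOfRingEquiv (shiftEquiv N v).toRingEquiv

/-- The square root `y_i = x_i^{1/2}` of the `i`-th variable, inside `K N`. -/
def y (N : ℕ) (i : Fin N) : K N := algebraMap (Pol N) (K N) (X i)

/-- The `i`-th variable `x_i` of `K N`. -/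
def x (N : ℕ) (i : Fin N) : K N := y N i ^ 2

/-- The parameter `q` inside `K N`. -/
def qK (N : ℕ) : K N := algebraMap (Pol N) (K N) (C qq)

end
noncomputable section

/-- The variables of type `A_{N-1}` Macdonald theory: `x_i`, realized as the generators of `K N`. -/
def xA (N : ℕ) (i : Fin N) : K N := y N i

/-- `∏_i Γ_i^{v_i}`, where `Γ_i` is the `q`-shift operator `x_i ↦ q x_i`. -/
def ΓA (N : ℕ) (v : Fin N → ℤ) : K N ≃+* K N := Γ N (2 • v)

/-- The type `A` difference operators
`M_{a,k} = Σ_{I ⊆ [1,N], |I|=a} (Π_{i∈I} x_i)^k Π_{i∈I,j∉I} x_i/(x_i−x_j) Π_{i∈I} Γ_i`. -/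
def MA (N : ℕ) (a : ℕ) (k : ℤ) : K N → K N := fun f =>
  ∑ I ∈ Finset.powersetCard a (Finset.univ : Finset (Fin N)),
    (∏ i ∈ I, xA N i) ^ k *
      ((∏ i ∈ I, ∏ j ∈ Iᶜ, xA N i / (xA N i - xA N j)) *
        ΓA N (fun i => if i ∈ I then 1 else 0) f)

/-- `M_{1,k} = x_1^k·x_1/(x_1−x_2)·Γ_1 + x_2^k·x_2/(x_2−x_1)·Γ_2` for `N = 2`. -/
def M1 (k : ℤ) : K 2 → K 2 := fun f =>
  xA 2 0 ^ k * (xA 2 0 / (xA 2 0 - xA 2 1)) * ΓA 2 ![1, 0] f +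
    xA 2 1 ^ k * (xA 2 1 / (xA 2 1 - xA 2 0)) * ΓA 2 ![0, 1] f

/-- `M_{2,k} = (x_1 x_2)^k Γ_1 Γ_2` for `N = 2`. -/
def M2 (k : ℤ) : K 2 → K 2 := fun f => (xA 2 0 * xA 2 1) ^ k * ΓA 2 ![1, 1] f

open MvPolynomial in
lemma shiftHom_comp (N : ℕ) (v w : Fin N → ℤ) :
    (shiftHom N v).comp (shiftHom N w) = shiftHom N (v + w) := by
  apply MvPolynomial.algHom_ext
  intro j
  simp only [AlgHom.comp_apply, shiftHom, aeval_X, map_mul, aeval_C]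
  rw [MvPolynomial.algebraMap_eq, ← mul_assoc, ← C_mul, ← zpow_add₀ sq_ne_zero, add_comm, Pi.add_apply]

lemma shiftEquiv_comp (N : ℕ) (v w : Fin N → ℤ) (p : Pol N) :
    shiftEquiv N v (shiftEquiv N w p) = shiftEquiv N (v + w) p := by
  have h := congrArg (fun h => h p) (congrArg (DFunLike.coe) (shiftHom_comp N v w))
  simpa [shiftEquiv] using h

lemma Γ_algebraMap (N : ℕ) (v : Fin N → ℤ) (p : Pol N) :
    Γ N v (algebraMap (Pol N) (K N) p) = algebraMap (Pol N) (K N) (shiftEquiv N v p) :=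
  IsFractionRing.ringEquivOfRingEquiv_algebraMap _ _

lemma Γ_comp (N : ℕ) (v w : Fin N → ℤ) (f : K N) :
    Γ N v (Γ N w f) = Γ N (v + w) f := by
  have h : ((Γ N v : K N →+* K N).comp (Γ N w : K N →+* K N)) = (Γ N (v + w) : K N →+* K N) := by
    apply IsLocalization.ringHom_ext (nonZeroDivisors (Pol N))
    apply RingHom.ext
    intro p
    simp only [RingHom.comp_apply, RingEquiv.coe_toRingHom, Γ_algebraMap, shiftEquiv_comp]
  exact congrArg (fun h => h f) (congrArg DFunLike.coe h)

open MvPolynomial in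
lemma Γ_y (N : ℕ) (v : Fin N → ℤ) (i : Fin N) :
    Γ N v (y N i) = algebraMap (Pol N) (K N) (C (sQ ^ (v i))) * y N i := by
  rw [y, Γ_algebraMap]
  have : shiftEquiv N v (X i) = C (sQ ^ (v i)) * X i := by
    simp [shiftEquiv, shiftHom]
  rw [this, map_mul]

set_option synthInstance.maxHeartbeats 400000

open MvPolynomial in
lemma injAux (p : Pol 2) (h : algebraMap (Pol 2) (K 2) p = 0) : p = 0 :=
  IsFractionRing.injective (Pol 2) (K 2)
    (show algebraMap (Pol 2) (K 2) p = algebraMap (Pol 2) (K 2) 0 by rw [map_zero]; exact h)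

open MvPolynomial in
lemma qK_zpow (m : ℤ) : algebraMap (Pol 2) (K 2) (C (qq ^ m)) = qK 2 ^ m :=
  map_zpow₀ ((algebraMap (Pol 2) (K 2)).comp (C : Rq →+* Pol 2)) qq m

open MvPolynomial in
lemma ΓA_x (v : Fin 2 → ℤ) (i : Fin 2) : ΓA 2 v (xA 2 i) = qK 2 ^ (v i) * xA 2 i := by
  rw [ΓA, xA, Γ_y]
  congr 1
  have h1 : sQ ^ ((2 • v) i) = qq ^ (v i) := by
    rw [show (2 • v) i = (2:ℤ) * v i by simp [Pi.smul_apply], zpow_mul]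
    rw [qq, zpow_two, pow_two]
  rw [h1, qK_zpow]

open MvPolynomial in
lemma ΓA_q (v : Fin 2 → ℤ) : ΓA 2 v (qK 2) = qK 2 := by
  rw [ΓA, qK, Γ_algebraMap]
  congr 1
  simp [shiftEquiv, shiftHom]

lemma ΓA_comp (v w : Fin 2 → ℤ) (f : K 2) : ΓA 2 v (ΓA 2 w f) = ΓA 2 (v + w) f := by
  rw [ΓA, ΓA, ΓA, Γ_comp, smul_add]

open MvPolynomial in
lemma x_ne (i : Fin 2) : xA 2 i ≠ 0 := by
  rw [xA, y]
  intro h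
  exact MvPolynomial.X_ne_zero i (injAux _ h)

lemma qK_ne : qK 2 ≠ 0 := by
  rw [qK]
  intro h
  have h2 := injAux _ h
  rw [MvPolynomial.C_eq_zero] at h2
  exact pow_ne_zero 2 sq_ne_zero h2

open MvPolynomial in
lemma sub_ne : xA 2 0 - xA 2 1 ≠ 0 := by
  rw [xA, xA, y, y, ← map_sub]
  intro h
  have h2 := injAux _ h
  rw [sub_eq_zero] at h2
  exact (by decide : (0 : Fin 2) ≠ 1) (MvPolynomial.X_injective h2)

open MvPolynomial in
lemma qsub_ne : qK 2 * xA 2 0 - xA 2 1 ≠ 0 := by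
  rw [xA, xA, y, y, qK, ← map_mul, ← map_sub]
  intro h
  have h3 := congrArg (MvPolynomial.coeff (Finsupp.single (1 : Fin 2) 1)) (injAux _ h)
  simp [MvPolynomial.coeff_C_mul, MvPolynomial.coeff_X', Finsupp.single_eq_single_iff] at h3

open MvPolynomial in
lemma qsub_ne' : xA 2 0 - qK 2 * xA 2 1 ≠ 0 := by
  rw [xA, xA, y, y, qK, ← map_mul, ← map_sub]
  intro h
  have h3 := congrArg (MvPolynomial.coeff (Finsupp.single (0 : Fin 2) 1)) (injAux _ h)
  simp [MvPolynomial.coeff_C_mul, MvPolynomial.coeff_X', Finsupp.single_eq_single_iff] at h3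

lemma va : (![1,0] : Fin 2 → ℤ) + ![1,0] = ![2,0] := by funext i; fin_cases i <;> decide
lemma vb : (![1,0] : Fin 2 → ℤ) + ![0,1] = ![1,1] := by funext i; fin_cases i <;> decide
lemma vc : (![0,1] : Fin 2 → ℤ) + ![1,0] = ![1,1] := by funext i; fin_cases i <;> decide
lemma vd : (![0,1] : Fin 2 → ℤ) + ![0,1] = ![0,2] := by funext i; fin_cases i <;> decide

lemma G10_0 : ΓA 2 ![1,0] (xA 2 0) = qK 2 * xA 2 0 := by rw [ΓA_x]; norm_num
lemma G10_1 : ΓA 2 ![1,0] (xA 2 1) = xA 2 1 := by rw [ΓA_x]; norm_num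
lemma G01_0 : ΓA 2 ![0,1] (xA 2 0) = xA 2 0 := by rw [ΓA_x]; norm_num
lemma G01_1 : ΓA 2 ![0,1] (xA 2 1) = qK 2 * xA 2 1 := by rw [ΓA_x]; norm_num
lemma G11_0 : ΓA 2 ![1,1] (xA 2 0) = qK 2 * xA 2 0 := by rw [ΓA_x]; norm_num
lemma G11_1 : ΓA 2 ![1,1] (xA 2 1) = qK 2 * xA 2 1 := by rw [ΓA_x]; norm_num

lemma c20 (f : K 2) : ΓA 2 ![1,0] (ΓA 2 ![1,0] f) = ΓA 2 ![2,0] f := by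
  rw [ΓA_comp, va]
lemma c11 (f : K 2) : ΓA 2 ![1,0] (ΓA 2 ![0,1] f) = ΓA 2 ![1,1] f := by
  rw [ΓA_comp, vb]
lemma c11' (f : K 2) : ΓA 2 ![0,1] (ΓA 2 ![1,0] f) = ΓA 2 ![1,1] f := by
  rw [ΓA_comp, vc]
lemma c02 (f : K 2) : ΓA 2 ![0,1] (ΓA 2 ![0,1] f) = ΓA 2 ![0,2] f := by
  rw [ΓA_comp, vd]


set_option maxHeartbeats 2000000

/-- the rank-one instance of the `A`-type quantum Q-system:
`q·M_{1,k+1} M_{1,k−1} = M_{1,k}² − M_{2,k} M_{0,k}` with `M_{0,k} = Id`. -/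
theorem stmt5 (k : ℤ) :
    qK 2 • (M1 (k + 1) ∘ M1 (k - 1)) = M1 k ∘ M1 k - M2 k ∘ (id : K 2 → K 2) := by
  funext f
  have hu := x_ne 0
  have hv := x_ne 1
  have hQ := qK_ne
  have h1 := sub_ne
  have h1' : xA 2 1 - xA 2 0 ≠ 0 := sub_ne_zero.mpr (Ne.symm (sub_ne_zero.mp h1))
  have h2 := qsub_ne
  have h2' : xA 2 1 - qK 2 * xA 2 0 ≠ 0 := sub_ne_zero.mpr (Ne.symm (sub_ne_zero.mp h2))
  have h3 := qsub_ne'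
  have h3' : qK 2 * xA 2 1 - xA 2 0 ≠ 0 := sub_ne_zero.mpr (Ne.symm (sub_ne_zero.mp h3))
  simp only [Pi.smul_apply, Function.comp_apply, Pi.sub_apply, id_eq, smul_eq_mul, M1, M2]
  simp only [map_add, map_mul, map_div₀, map_sub, map_zpow₀, G10_0, G10_1, G01_0, G01_1,
    c20, c11, c11', c02]
  simp only [mul_zpow, zpow_add_one₀ hu, zpow_sub_one₀ hu, zpow_add_one₀ hv, zpow_sub_one₀ hv,
    zpow_add_one₀ hQ, zpow_sub_one₀ hQ]
  field_simp
  ring
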